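/- Let C₁, C₂ be self-adjoint nonnegative operators on a finite-dimensional Hilbert space, σ ≥ 1/2, τ > 0, and set B̃_α = E + στ C_α. Then the transition operator S = E − τ B̃₁^{-1}(C₁ + C₂) B̃₂^{-1} can be written as S = ((2σ−1)/(2σ)) E + (1/(2σ)) S₁ S₂, where S_α = (E + στ C_α)^{-1}(E − στ C_α), and consequently ‖S‖ ≤ 1. -/

import Mathlib

open scoped RealInnerProductSpace

set_option maxHeartbeats 1000000
set_option synthInstance.maxHeartbeats 400000

/-- In a ring, an element commuting with `B` commutes with a two-sided inverse of `B`. -/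
lemma aux_commute_inv {A : Type*} [Ring A] {B Binv X : A}
    (hl : Binv * B = 1) (hr : B * Binv = 1) (h : X * B = B * X) :
    X * Binv = Binv * X := by
  calc X * Binv = ((Binv * B) * X) * Binv := by rw [hl, one_mul]
    _ = (Binv * (B * X)) * Binv := by rw [mul_assoc Binv B X]
    _ = (Binv * (X * B)) * Binv := by rw [h]
    _ = (Binv * X) * (B * Binv) := by rw [← mul_assoc Binv X B, mul_assoc (Binv * X) B Binv]
    _ = Binv * X := by rw [hr, mul_one]

/-- The contraction estimate ‖(1+aC)⁻¹(1-aC)‖ ≤ 1. -/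
lemma aux_contract {H : Type*} [NormedAddCommGroup H] [InnerProductSpace ℝ H]
    (C : H →L[ℝ] H) (hnn : ∀ x : H, 0 ≤ ⟪C x, x⟫) (a : ℝ) (ha : 0 ≤ a)
    (Binv : H →L[ℝ] H)
    (hl : Binv ∘L (1 + a • C) = 1) (hr : (1 + a • C) ∘L Binv = 1) :
    ‖Binv ∘L (1 - a • C)‖ ≤ 1 := by
  rw [← ContinuousLinearMap.mul_def] at hl hr ⊢
  have hcom : (1 - a • C) * (1 + a • C) = (1 + a • C) * (1 - a • C) := by
    simp only [mul_add, add_mul, mul_sub, sub_mul, smul_mul_assoc, mul_smul_comm, smul_smul,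
      one_mul, mul_one]
    module
  have hkey : Binv * (1 - a • C) = (1 - a • C) * Binv :=
    (aux_commute_inv hl hr hcom).symm
  rw [hkey]
  refine ContinuousLinearMap.opNorm_le_bound _ zero_le_one (fun x => ?_)
  set y := Binv x with hy
  have hx : (1 + a • C) y = x := by
    have := congrArg (fun T => T x) hr
    simpa using this
  have h1 : ((1 - a • C) * Binv) x = y - a • C y := by
    simp [ContinuousLinearMap.mul_def, hy, sub_smul]
  have h2 : ‖y - a • C y‖ ≤ ‖y + a • C y‖ := by
    have hsq : ‖y - a • C y‖ ^ 2 ≤ ‖y + a • C y‖ ^ 2 := by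
      rw [norm_sub_sq_real, norm_add_sq_real]
      have : (0:ℝ) ≤ ⟪y, a • C y⟫ := by
        rw [real_inner_smul_right]
        exact mul_nonneg ha (by rw [real_inner_comm]; exact hnn y)
      linarith
    nlinarith [norm_nonneg (y - a • C y), norm_nonneg (y + a • C y)]
  have hx' : y + a • C y = x := by simpa using hx
  rw [h1, one_mul]
  calc ‖y - a • C y‖ ≤ ‖y + a • C y‖ := h2
    _ = ‖x‖ := by rw [hx']

theorem stmt8 {H : Type*} [NormedAddCommGroup H] [InnerProductSpace ℝ H]
    [FiniteDimensional ℝ H]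
    (C₁ C₂ : H →L[ℝ] H) (hC₁ : IsSelfAdjoint C₁) (hC₂ : IsSelfAdjoint C₂)
    (hC₁nn : ∀ x : H, 0 ≤ ⟪C₁ x, x⟫) (hC₂nn : ∀ x : H, 0 ≤ ⟪C₂ x, x⟫)
    (σ τ : ℝ) (hσ : 1/2 ≤ σ) (hτ : 0 < τ)
    (B₁inv B₂inv : H →L[ℝ] H)
    (hB₁l : B₁inv ∘L (1 + (σ * τ) • C₁) = 1) (hB₁r : (1 + (σ * τ) • C₁) ∘L B₁inv = 1)
    (hB₂l : B₂inv ∘L (1 + (σ * τ) • C₂) = 1) (hB₂r : (1 + (σ * τ) • C₂) ∘L B₂inv = 1)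
    (S : H →L[ℝ] H) (hS : S = 1 - τ • (B₁inv ∘L (C₁ + C₂) ∘L B₂inv)) :
    S = ((2*σ - 1)/(2*σ)) • (1 : H →L[ℝ] H) +
        (1/(2*σ)) • ((B₁inv ∘L (1 - (σ * τ) • C₁)) ∘L (B₂inv ∘L (1 - (σ * τ) • C₂))) ∧
    ‖S‖ ≤ 1 := by
  have hσ0 : 0 < σ := lt_of_lt_of_le (by norm_num) hσ
  have ha : 0 ≤ σ * τ := mul_nonneg hσ0.le hτ.le
  simp only [← ContinuousLinearMap.mul_def] at hS hB₁l hB₁r hB₂l hB₂r ⊢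
  set a := σ * τ with hadef
  set B₁ : H →L[ℝ] H := 1 + a • C₁ with hB₁def
  set B₂ : H →L[ℝ] H := 1 + a • C₂ with hB₂def
  set D₁ : H →L[ℝ] H := 1 - a • C₁ with hD₁def
  set D₂ : H →L[ℝ] H := 1 - a • C₂ with hD₂def
  -- commute D₂ with B₂inv
  have hcom2 : D₂ * B₂ = B₂ * D₂ := by
    rw [hD₂def, hB₂def]
    simp only [mul_add, add_mul, mul_sub, sub_mul, smul_mul_assoc, mul_smul_comm, smul_smul,
      one_mul, mul_one]
    module
  have hkey : B₂inv * D₂ = D₂ * B₂inv := (aux_commute_inv hB₂l hB₂r hcom2).symm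
  -- expansions
  have hBB : B₁ * B₂ = 1 + a • C₁ + a • C₂ + (a*a) • (C₁ * C₂) := by
    rw [hB₁def, hB₂def]
    simp only [mul_add, add_mul, one_mul, mul_one, smul_mul_assoc, mul_smul_comm, smul_smul]
    module
  have hDD : D₁ * D₂ = 1 - a • C₁ - a • C₂ + (a*a) • (C₁ * C₂) := by
    rw [hD₁def, hD₂def]
    simp only [mul_sub, sub_mul, one_mul, mul_one, smul_mul_assoc, mul_smul_comm, smul_smul]
    module
  -- the middle identity
  have claim : ((2*σ - 1)/(2*σ)) • (B₁ * B₂) + (1/(2*σ)) • (D₁ * D₂)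
      = B₁ * B₂ - τ • (C₁ + C₂) := by
    rw [hBB, hDD, hadef]
    have h2σ : (2*σ) ≠ 0 := by positivity
    match_scalars <;> field_simp <;> ring
  -- sandwich forms
  have sandwich : ∀ X : H →L[ℝ] H, B₁inv * (B₁ * X * B₂) * B₂inv = B₁inv * B₁ * X * (B₂ * B₂inv) := by
    intro X; noncomm_ring
  have e1 : S = B₁inv * (B₁ * B₂ - τ • (C₁ + C₂)) * B₂inv := by
    rw [hS, mul_sub, sub_mul]
    congr 1
    · calc (1 : H →L[ℝ] H) = (B₁inv * B₁) * (B₂ * B₂inv) := by rw [hB₁l, hB₂r, one_mul]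
        _ = B₁inv * (B₁ * B₂) * B₂inv := by noncomm_ring
    · simp only [mul_smul_comm, smul_mul_assoc, mul_assoc]
  have e2 : ((2*σ - 1)/(2*σ)) • (1 : H →L[ℝ] H)
        + (1/(2*σ)) • ((B₁inv * D₁) * (B₂inv * D₂))
      = B₁inv * (((2*σ - 1)/(2*σ)) • (B₁ * B₂) + (1/(2*σ)) • (D₁ * D₂)) * B₂inv := by
    rw [mul_add, add_mul]
    congr 1
    · simp only [mul_smul_comm, smul_mul_assoc]
      congr 1
      calc (1 : H →L[ℝ] H) = (B₁inv * B₁) * (B₂ * B₂inv) := by rw [hB₁l, hB₂r, one_mul]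
        _ = B₁inv * (B₁ * B₂) * B₂inv := by noncomm_ring
    · simp only [mul_smul_comm, smul_mul_assoc]
      congr 1
      calc B₁inv * D₁ * (B₂inv * D₂) = B₁inv * D₁ * (D₂ * B₂inv) := by rw [hkey]
        _ = B₁inv * (D₁ * D₂) * B₂inv := by noncomm_ring
  have hid : S = ((2*σ - 1)/(2*σ)) • (1 : H →L[ℝ] H)
        + (1/(2*σ)) • ((B₁inv * D₁) * (B₂inv * D₂)) := by
    rw [e1, e2, claim]
  refine ⟨hid, ?_⟩
  -- norm bound
  have hn1 : ‖B₁inv * D₁‖ ≤ 1 := by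
    rw [ContinuousLinearMap.mul_def]
    exact aux_contract C₁ hC₁nn a ha B₁inv
      (by rw [← ContinuousLinearMap.mul_def]; exact hB₁l)
      (by rw [← ContinuousLinearMap.mul_def]; exact hB₁r)
  have hn2 : ‖B₂inv * D₂‖ ≤ 1 := by
    rw [ContinuousLinearMap.mul_def]
    exact aux_contract C₂ hC₂nn a ha B₂inv
      (by rw [← ContinuousLinearMap.mul_def]; exact hB₂l)
      (by rw [← ContinuousLinearMap.mul_def]; exact hB₂r)
  have hlam : 0 ≤ (2*σ - 1)/(2*σ) := by
    apply div_nonneg <;> linarith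
  have hmu : 0 ≤ 1/(2*σ) := by positivity
  calc ‖S‖ = ‖((2*σ - 1)/(2*σ)) • (1 : H →L[ℝ] H)
        + (1/(2*σ)) • ((B₁inv * D₁) * (B₂inv * D₂))‖ := by rw [hid]
    _ ≤ ‖((2*σ - 1)/(2*σ)) • (1 : H →L[ℝ] H)‖
        + ‖(1/(2*σ)) • ((B₁inv * D₁) * (B₂inv * D₂))‖ := norm_add_le _ _
    _ ≤ ((2*σ - 1)/(2*σ)) * 1 + (1/(2*σ)) * (1 * 1) := by
        have b1 : ‖((2*σ - 1)/(2*σ)) • (1 : H →L[ℝ] H)‖ ≤ ((2*σ - 1)/(2*σ)) * 1 := by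
          rw [norm_smul ((2*σ - 1)/(2*σ)) (1 : H →L[ℝ] H), Real.norm_of_nonneg hlam]
          exact mul_le_mul_of_nonneg_left ContinuousLinearMap.norm_id_le hlam
        have b2 : ‖(1/(2*σ)) • ((B₁inv * D₁) * (B₂inv * D₂))‖ ≤ (1/(2*σ)) * (1 * 1) := by
          rw [norm_smul (1/(2*σ)) ((B₁inv * D₁) * (B₂inv * D₂)), Real.norm_of_nonneg hmu]
          exact mul_le_mul_of_nonneg_left
            (le_trans (norm_mul_le _ _) (mul_le_mul hn1 hn2 (norm_nonneg _) zero_le_one)) hmu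
        exact add_le_add b1 b2
    _ = 1 := by field_simp; ring
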